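/- Let V be a finite-dimensional real vector space, π a bivector on V with induced map π♯ : V* → V, and W ⊆ V a subspace. Then V is the (internal) direct sum of W and W^π := π♯(Ann(W)) if and only if the restriction of π to Ann(W) is nondegenerate, i.e. for every nonzero α ∈ Ann(W) there exists β ∈ Ann(W) with π(α,β) ≠ 0. (Pointwise criterion for a submanifold to be cosymplectic.) -/

import Mathlib

/-- Pointwise criterion for a submanifold to be cosymplectic: for a bivector `π` on a
finite-dimensional real vector space `V` with induced map `π♯ : V* → V` and a
subspace `W ⊆ V`, the space `V` is the internal direct sum of `W` and
`W^π = π♯(Ann(W))` if and only if the restriction of `π` to `Ann(W)` is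
nondegenerate. -/
theorem isCompl_piOrthogonal_iff_nondeg_on_annihilator {V : Type*} [AddCommGroup V]
    [Module ℝ V] [FiniteDimensional ℝ V]
    (π : Module.Dual ℝ V →ₗ[ℝ] Module.Dual ℝ V →ₗ[ℝ] ℝ)
    (hπ : ∀ α : Module.Dual ℝ V, π α α = 0)
    (sharp : Module.Dual ℝ V →ₗ[ℝ] V)
    (hsharp : ∀ α β : Module.Dual ℝ V, β (sharp α) = π α β)
    (W : Submodule ℝ V) :
    IsCompl W (Submodule.map sharp (Submodule.dualAnnihilator W)) ↔
      ∀ α ∈ Submodule.dualAnnihilator W, α ≠ 0 →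
        ∃ β ∈ Submodule.dualAnnihilator W, π α β ≠ 0 := by
  have hskew : ∀ α β : Module.Dual ℝ V, π β α = -π α β := by
    intro α β
    have h := hπ (α + β)
    simp only [map_add, LinearMap.add_apply, hπ] at h
    linarith
  set A := Submodule.dualAnnihilator W with hA
  constructor
  · rintro ⟨_, hcod⟩ α hα hα0
    by_contra hc
    push_neg at hc
    apply hα0
    ext v
    have hv : v ∈ W ⊔ Submodule.map sharp A := by
      rw [codisjoint_iff.mp hcod]; trivial
    obtain ⟨w, hw, x, hx, rfl⟩ := Submodule.mem_sup.mp hv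
    obtain ⟨γ, hγ, rfl⟩ := hx
    have h1 : α w = 0 := (Submodule.mem_dualAnnihilator α).mp hα w hw
    have h2 : α (sharp γ) = 0 := by
      rw [hsharp, hskew, hc γ hγ, neg_zero]
    simp [h1, h2]
  · intro hnd
    have hdisj : Disjoint W (Submodule.map sharp A) := by
      rw [Submodule.disjoint_def]
      rintro x hxW ⟨α, hα, rfl⟩
      by_contra hx0
      have hα0 : α ≠ 0 := by rintro rfl; simp at hx0
      obtain ⟨β, hβ, hne⟩ := hnd α hα hα0
      exact hne (by rw [← hsharp]; exact (Submodule.mem_dualAnnihilator β).mp hβ _ hxW)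
    refine ⟨hdisj, ?_⟩
    rw [codisjoint_iff]
    have hker : LinearMap.ker (sharp.comp A.subtype) = ⊥ := by
      rw [eq_bot_iff]
      rintro ⟨α, hα⟩ hker
      have h0 : sharp α = 0 := hker
      have hz : α = 0 := by
        by_contra hα0
        obtain ⟨β, _, hne⟩ := hnd α hα hα0
        exact hne (by rw [← hsharp, h0, map_zero])
      simp only [Submodule.mem_bot, Submodule.mk_eq_zero]; exact hz
    have hinj : Function.Injective (sharp.comp A.subtype) := by
      intro x y hxy
      apply Subtype.ext
      have h4 : sharp ((x : Module.Dual ℝ V) - y) = 0 := by rw [map_sub, sub_eq_zero]; exact hxy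
      have h5 : (⟨(x : Module.Dual ℝ V) - y, A.sub_mem x.2 y.2⟩ : A) ∈ LinearMap.ker (sharp.comp A.subtype) := h4
      rw [hker, Submodule.mem_bot, Submodule.mk_eq_zero, sub_eq_zero] at h5
      exact h5
    have hrange : LinearMap.range (sharp.comp A.subtype) = Submodule.map sharp A := by
      rw [LinearMap.range_comp, Submodule.range_subtype]
    have hfr := LinearMap.finrank_range_of_inj hinj
    rw [hrange] at hfr
    have hdim : Module.finrank ℝ W + Module.finrank ℝ A = Module.finrank ℝ V := by
      have h1 := Subspace.finrank_add_finrank_dualCoannihilator_eq A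
      rw [hA, Subspace.dualAnnihilator_dualCoannihilator_eq] at h1
      rw [hA]; linarith
    apply Submodule.eq_top_of_finrank_eq
    have h2 := Submodule.finrank_sup_add_finrank_inf_eq W (Submodule.map sharp A)
    rw [disjoint_iff.mp hdisj] at h2
    simp only [finrank_bot, add_zero] at h2
    omega
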